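/- arXiv:1006.5357 — 2 statements merged into one kernel-verified Lean document; each statement's English description precedes it below -/
import Mathlib

section
/- Let S be a commutative local ring whose maximal ideal 𝔐 contains p, let G be a finite group, let C be a normal cyclic p-subgroup of G, and set G′ = G/C. Then the ring homomorphism S[G] → S[G′] induced by the projection G → G′ restricts to a surjective map on unit groups S[G]^× → S[G′]^×. -/
open MonoidAlgebra

section Aux

variable {k : Type} [CommRing k] {G : Type} [Group G]

lemma aux_push (σ : G) (hσ : ∀ g : G, ∃ m : ℕ, g⁻¹ * σ * g = σ ^ m)
    (a : MonoidAlgebra k G) :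
    ∃ b : MonoidAlgebra k G, (single σ 1 - 1) * a = b * (single σ 1 - 1) := by
  induction a using MonoidAlgebra.induction_linear with
  | zero => exact ⟨0, by simp⟩
  | add x y hx hy =>
      obtain ⟨b₁, h₁⟩ := hx; obtain ⟨b₂, h₂⟩ := hy
      exact ⟨b₁ + b₂, by rw [mul_add, h₁, h₂, add_mul]⟩
  | single g c =>
      obtain ⟨m, hm⟩ := hσ g
      refine ⟨single g c * ∑ i ∈ Finset.range m, (single σ 1 : MonoidAlgebra k G) ^ i, ?_⟩
      have hgm : g * σ ^ m = σ * g := by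
        rw [← hm]; group
      have l : (single σ (1:k) - 1) * single g c = single (σ * g) c - single g c := by
        simp [sub_mul, single_mul_single]
      have r : single g c * ((single σ (1:k)) ^ m - 1) = single (σ * g) c - single g c := by
        simp [mul_sub, single_mul_single, single_pow, hgm]
      rw [l, mul_assoc, geom_sum_mul, r]

lemma aux_ker_form (C : Subgroup G) (σ : G)
    (hgen : ∀ τ ∈ C, ∃ m : ℕ, τ = σ ^ m)
    (s : G ⧸ C → G) (hs : ∀ q, QuotientGroup.mk (s q) = q)
    (x : MonoidAlgebra k G)
    (hx : MonoidAlgebra.mapDomain (QuotientGroup.mk : G → G ⧸ C) x = 0) :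
    ∃ a : MonoidAlgebra k G, x = a * (single σ 1 - 1) := by
  have hmemC : ∀ g : G, (s (QuotientGroup.mk g))⁻¹ * g ∈ C :=
    fun g => QuotientGroup.eq.mp (hs (QuotientGroup.mk g))
  choose m hm using fun g : G => hgen _ (hmemC g)
  refine ⟨∑ g ∈ x.coeff.support, single (s (QuotientGroup.mk g)) (x.coeff g) *
    ∑ i ∈ Finset.range (m g), (single σ 1 : MonoidAlgebra k G) ^ i, ?_⟩
  have hterm : ∀ g ∈ x.coeff.support,
      (single (s (QuotientGroup.mk g)) (x.coeff g) *
        ∑ i ∈ Finset.range (m g), (single σ (1:k) : MonoidAlgebra k G) ^ i) *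
          (single σ 1 - 1)
      = single g (x.coeff g) - single (s (QuotientGroup.mk g)) (x.coeff g) := by
    intro g _
    have hg' : s (QuotientGroup.mk g) * σ ^ (m g) = g := by rw [← hm g]; group
    rw [mul_assoc, geom_sum_mul]
    simp [mul_sub, single_mul_single, single_pow, hg']
  have hmd : (MonoidAlgebra.mapDomain (fun g => s (QuotientGroup.mk g)) x : MonoidAlgebra k G)
      = 0 := by
    have hco : (fun g => s (QuotientGroup.mk g)) = s ∘ (QuotientGroup.mk : G → G ⧸ C) := rfl
    have hx' := congrArg MonoidAlgebra.coeff hx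
    simp only [MonoidAlgebra.mapDomain, coeff_ofCoeff, coeff_zero] at hx'
    rw [hco]
    apply coeff_injective
    simp only [MonoidAlgebra.mapDomain, coeff_ofCoeff, Finsupp.mapDomain_comp, hx',
      Finsupp.mapDomain_zero, coeff_zero]
  have h3' : ∑ g ∈ x.coeff.support, (single (s (QuotientGroup.mk g)) (x.coeff g) : MonoidAlgebra k G)
      = 0 := by
    calc ∑ g ∈ x.coeff.support, (single (s (QuotientGroup.mk g)) (x.coeff g) : MonoidAlgebra k G)
        = (MonoidAlgebra.mapDomain (fun g => s (QuotientGroup.mk g)) x : MonoidAlgebra k G) := by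
          apply coeff_injective
          rw [MonoidAlgebra.mapDomain, coeff_ofCoeff, Finsupp.mapDomain, Finsupp.sum, coeff_sum]
          rfl
      _ = 0 := hmd
  have hmain : (∑ g ∈ x.coeff.support, single (s (QuotientGroup.mk g)) (x.coeff g) *
      ∑ i ∈ Finset.range (m g), (single σ 1 : MonoidAlgebra k G) ^ i) * (single σ 1 - 1)
      = x := by
    rw [Finset.sum_mul, Finset.sum_congr rfl hterm, Finset.sum_sub_distrib, h3', sub_zero]
    exact MonoidAlgebra.sum_coeff_single x
  exact hmain.symm

lemma aux_pow_collect {R : Type} [Ring R] (t : R) (hpush : ∀ a : R, ∃ b, t * a = b * t) :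
    ∀ (m : ℕ) (a : R), ∃ b : R, (a * t) ^ m = b * t ^ m
  | 0, a => ⟨1, by simp⟩
  | m + 1, a => by
      obtain ⟨b, hb⟩ := aux_pow_collect t hpush m a
      obtain ⟨b', hb'⟩ := hpush b
      refine ⟨a * b', ?_⟩
      rw [pow_succ', hb, mul_assoc a t, ← mul_assoc t b, hb', mul_assoc b' t, ← pow_succ',
        ← mul_assoc]

lemma aux_nil (p : ℕ) [Fact p.Prime] (κ : Type) [Field κ] [CharP κ p]
    {G : Type} [Group G] (C : Subgroup G) [hN : C.Normal]
    (σ : G) (hσC : σ ∈ C) (n : ℕ) (hord : σ ^ p ^ n = 1)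
    (hgen : ∀ τ ∈ C, ∃ m : ℕ, τ = σ ^ m)
    (s : G ⧸ C → G) (hs : ∀ q, QuotientGroup.mk (s q) = q)
    (x : MonoidAlgebra κ G)
    (hx : MonoidAlgebra.mapDomain (QuotientGroup.mk : G → G ⧸ C) x = 0) :
    x ^ p ^ n = 0 := by
  haveI : CharP (MonoidAlgebra κ G) p :=
    charP_of_injective_ringHom (f := (singleOneRingHom : κ →+* MonoidAlgebra κ G))
      (fun a b hab => MonoidAlgebra.single_right_injective (m := (1 : G)) (by simpa using hab)) p
  have htq : (single σ (1:κ) - 1 : MonoidAlgebra κ G) ^ p ^ n = 0 := by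
    rw [sub_pow_char_pow_of_commute p n (Commute.one_right _), one_pow, single_pow, one_pow,
      hord, ← one_def, sub_self]
  obtain ⟨a, ha⟩ := aux_ker_form C σ hgen s hs x hx
  have hσconj : ∀ g : G, ∃ m : ℕ, g⁻¹ * σ * g = σ ^ m := by
    intro g
    have h1 : g⁻¹ * σ * g ∈ C := by
      have := hN.conj_mem σ hσC g⁻¹
      simpa using this
    exact hgen _ h1
  obtain ⟨b, hb⟩ := aux_pow_collect _ (aux_push σ hσconj) (p ^ n) a
  rw [ha, hb, htq, mul_zero]

end Aux

section Res

variable (S : Type) [CommRing S] [IsLocalRing S] (G : Type) [Group G]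

/-- Coefficient-wise reduction to the residue field, as a ring hom. -/
noncomputable def resHom : MonoidAlgebra S G →+* MonoidAlgebra (IsLocalRing.ResidueField S) G :=
  liftNCRingHom (singleOneRingHom.comp (IsLocalRing.residue S)) (of _ G)
    (fun r g => by
      simp only [RingHom.coe_comp, Function.comp_apply, singleOneRingHom_apply, of_apply]
      exact single_one_comm _ _)

lemma resHom_single (g : G) (c : S) :
    resHom S G (single g c) = single g (IsLocalRing.residue S c) := by
  simp [resHom, liftNCRingHom, liftNC_single, single_mul_single]

lemma resHom_apply (x : MonoidAlgebra S G) :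
    (resHom S G x).coeff = Finsupp.mapRange (IsLocalRing.residue S) (map_zero _) x.coeff := by
  induction x using MonoidAlgebra.induction_linear with
  | zero => simp
  | add f g hf hg =>
      rw [map_add, coeff_add, coeff_add, hf, hg, Finsupp.mapRange_add (map_add _)]
  | single g c => rw [resHom_single, coeff_single, coeff_single, Finsupp.mapRange_single]

lemma resHom_eq_zero_iff (x : MonoidAlgebra S G) :
    resHom S G x = 0 ↔ ∀ g, x.coeff g ∈ IsLocalRing.maximalIdeal S := by
  rw [← coeff_eq_zero, resHom_apply]
  constructor
  · intro h g
    have h1 : (Finsupp.mapRange (IsLocalRing.residue S) (map_zero _) x.coeff) g = 0 := by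
      rw [h]; rfl
    rw [Finsupp.mapRange_apply] at h1
    exact Ideal.Quotient.eq_zero_iff_mem.mp h1
  · intro h
    exact Finsupp.ext fun g => by
      rw [Finsupp.mapRange_apply]
      exact Ideal.Quotient.eq_zero_iff_mem.mpr (h g)

lemma aux_mem_smul (x : MonoidAlgebra S G)
    (hx : ∀ g, x.coeff g ∈ IsLocalRing.maximalIdeal S) :
    x ∈ (IsLocalRing.maximalIdeal S) • (⊤ : Submodule S (MonoidAlgebra S G)) := by
  have hrepr : x = ∑ g ∈ x.coeff.support, (x.coeff g) • (single g (1:S) : MonoidAlgebra S G) := by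
    conv_lhs => rw [← MonoidAlgebra.sum_coeff_single x]
    rw [Finsupp.sum]
    refine Finset.sum_congr rfl fun g _ => ?_
    rw [MonoidAlgebra.smul_single', mul_one]
  rw [hrepr]
  exact Submodule.sum_mem _ fun g _ => Submodule.smul_mem_smul (hx g) trivial

lemma aux_isUnit [Finite G] (k : MonoidAlgebra S G) (q : ℕ)
    (hk : (resHom S G k) ^ q = 0) : IsUnit (1 + k) := by
  haveI : Module.Finite S (MonoidAlgebra S G) := Module.Finite.equiv (MonoidAlgebra.coeffLinearEquiv S).symm
  set a : MonoidAlgebra S G := 1 + k with ha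
  set w : MonoidAlgebra S G := ∑ i ∈ Finset.range q, (-k) ^ i with hw
  have hwa : w * a = 1 - (-k) ^ q := by
    have h1 := geom_sum_mul (-k) q
    have h2 : (-k : MonoidAlgebra S G) - 1 = -a := by rw [ha]; abel
    rw [h2, mul_neg] at h1
    have h3 : w * a = -((-k) ^ q - 1) := by rw [← h1, neg_neg]
    rw [h3, neg_sub]
  have hkw : k * w = w * k := by
    rw [hw, Finset.mul_sum, Finset.sum_mul]
    exact Finset.sum_congr rfl fun i _ => (((Commute.refl k).neg_right).pow_right i).eq
  have haw : a * w = w * a := by rw [ha, add_mul, mul_add, one_mul, mul_one, hkw]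
  have hres : resHom S G ((-k) ^ q) = 0 := by
    rw [map_pow, map_neg, neg_pow, hk, mul_zero]
  have hL : ∀ x : MonoidAlgebra S G, (-k) ^ q * x ∈
      (IsLocalRing.maximalIdeal S) • (⊤ : Submodule S (MonoidAlgebra S G)) := by
    intro x
    apply aux_mem_smul
    rw [← resHom_eq_zero_iff, map_mul, hres, zero_mul]
  have hR : ∀ x : MonoidAlgebra S G, x * (-k) ^ q ∈
      (IsLocalRing.maximalIdeal S) • (⊤ : Submodule S (MonoidAlgebra S G)) := by
    intro x
    apply aux_mem_smul
    rw [← resHom_eq_zero_iff, map_mul, hres, mul_zero]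
  have hjac : IsLocalRing.maximalIdeal S ≤ (⊥ : Ideal S).jacobson :=
    IsLocalRing.maximalIdeal_le_jacobson ⊥
  have hbL : ∃ b : MonoidAlgebra S G, a * b = 1 := by
    have hle : (⊤ : Submodule S (MonoidAlgebra S G)) ≤
        LinearMap.range (LinearMap.mulLeft S a) := by
      apply Submodule.le_of_le_smul_of_le_jacobson_bot Module.Finite.fg_top hjac
      intro x _
      have h1 : a * (w * x) = x - (-k) ^ q * x := by
        rw [← mul_assoc, haw, hwa, sub_mul, one_mul]
      have hx : x = a * (w * x) + (-k) ^ q * x := by rw [h1]; abel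
      rw [hx]
      exact Submodule.add_mem_sup ⟨w * x, by simp⟩ (hL x)
    obtain ⟨b, hb⟩ := hle (Submodule.mem_top : (1 : MonoidAlgebra S G) ∈ ⊤)
    exact ⟨b, by simpa using hb⟩
  have hcR : ∃ c : MonoidAlgebra S G, c * a = 1 := by
    have hle : (⊤ : Submodule S (MonoidAlgebra S G)) ≤
        LinearMap.range (LinearMap.mulRight S a) := by
      apply Submodule.le_of_le_smul_of_le_jacobson_bot Module.Finite.fg_top hjac
      intro x _
      have h1 : (x * w) * a = x - x * (-k) ^ q := by
        rw [mul_assoc, hwa, mul_sub, mul_one]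
      have hx : x = (x * w) * a + x * (-k) ^ q := by rw [h1]; abel
      rw [hx]
      exact Submodule.add_mem_sup ⟨x * w, by simp⟩ (hR x)
    obtain ⟨c, hc⟩ := hle (Submodule.mem_top : (1 : MonoidAlgebra S G) ∈ ⊤)
    exact ⟨c, by simpa using hc⟩
  obtain ⟨b, hb⟩ := hbL
  obtain ⟨c, hc⟩ := hcR
  have hcb : c = b := by rw [← mul_one c, ← hb, ← mul_assoc, hc, one_mul]
  exact ⟨⟨a, b, hb, by rw [← hcb, hc]⟩, rfl⟩

end Res

/-! STATEMENT 10: Let `S` be a commutative local ring whose maximal ideal contains `p`,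
`G` a finite group, `C` a normal cyclic `p`-subgroup of `G` and `G' = G/C`. Then the
induced ring homomorphism `S[G] → S[G']` restricts to a surjection on unit groups. -/

theorem units_map_surjective_of_quotient_by_normal_cyclic_pSubgroup
    (p : ℕ) [Fact p.Prime] (S : Type) [CommRing S] [IsLocalRing S]
    (hp : (p : S) ∈ IsLocalRing.maximalIdeal S)
    (G : Type) [Group G] [Finite G]
    (C : Subgroup G) [C.Normal] (hCcyc : IsCyclic C) (hCp : IsPGroup p C) :
    Function.Surjective
      (Units.map (MonoidAlgebra.mapDomainRingHom S (QuotientGroup.mk' C)).toMonoidHom :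
        (MonoidAlgebra S G)ˣ → (MonoidAlgebra S (G ⧸ C))ˣ) := by
  classical
  intro u'
  set f := MonoidAlgebra.mapDomainRingHom S (QuotientGroup.mk' C) with hfdef
  -- a section of the quotient map
  have hmk : Function.Surjective (QuotientGroup.mk : G → G ⧸ C) := QuotientGroup.mk'_surjective C
  set s : G ⧸ C → G := Function.surjInv hmk with hsdef
  have hs : ∀ q : G ⧸ C, QuotientGroup.mk (s q) = q := fun q => Function.surjInv_eq hmk q
  -- surjectivity of `f`
  have hfsurj : Function.Surjective f := by
    intro y
    refine ⟨MonoidAlgebra.mapDomain s y, ?_⟩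
    have : f (MonoidAlgebra.mapDomain s y)
        = MonoidAlgebra.mapDomain (QuotientGroup.mk : G → G ⧸ C) (MonoidAlgebra.mapDomain s y) := rfl
    rw [this]
    apply coeff_injective
    simp only [MonoidAlgebra.mapDomain, coeff_ofCoeff, ← Finsupp.mapDomain_comp]
    have hco : ((QuotientGroup.mk : G → G ⧸ C) ∘ s) = id := funext fun q => hs q
    rw [hco, Finsupp.mapDomain_id]
  obtain ⟨x, hx⟩ := hfsurj (↑u' : MonoidAlgebra S (G ⧸ C))
  obtain ⟨y, hy⟩ := hfsurj (↑(u'⁻¹) : MonoidAlgebra S (G ⧸ C))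
  -- characteristic of the residue field
  haveI : CharP (IsLocalRing.ResidueField S) p := by
    refine (CharP.charP_iff_prime_eq_zero Fact.out).mpr ?_
    have h0 : IsLocalRing.residue S (p : S) = 0 := Ideal.Quotient.eq_zero_iff_mem.mpr hp
    rwa [map_natCast] at h0
  -- generator data
  obtain ⟨γ, hγ⟩ := hCcyc.exists_generator
  obtain ⟨n, hn⟩ := hCp γ
  set σ : G := (γ : G) with hσdef
  have hσC : σ ∈ C := γ.2
  have hord : σ ^ p ^ n = 1 := by
    have h1 : ((γ ^ p ^ n : C) : G) = ((1 : C) : G) := congrArg _ hn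
    simpa using h1
  have hgen : ∀ τ ∈ C, ∃ m : ℕ, τ = σ ^ m := by
    intro τ hτ
    have h1 : (⟨τ, hτ⟩ : C) ∈ Subgroup.zpowers γ := hγ _
    have h2 : (⟨τ, hτ⟩ : C) ∈ Submonoid.powers γ :=
      ((isOfFinOrder_of_finite γ).mem_powers_iff_mem_zpowers).mpr h1
    obtain ⟨m, hm⟩ := h2
    refine ⟨m, ?_⟩
    have h3 : ((γ ^ m : C) : G) = τ := congrArg Subtype.val hm
    simpa using h3.symm
  -- commuting square
  have hcommSq : (MonoidAlgebra.mapDomainRingHom (IsLocalRing.ResidueField S)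
      (QuotientGroup.mk' C)).comp (resHom S G) = (resHom S (G ⧸ C)).comp f := by
    apply MonoidAlgebra.ringHom_ext <;> intro b <;>
      simp [resHom_single, MonoidAlgebra.mapDomain_single, hfdef]
  have hker_res : ∀ z : MonoidAlgebra S G, f z = 0 →
      MonoidAlgebra.mapDomain (QuotientGroup.mk : G → G ⧸ C) (resHom S G z) = 0 := by
    intro z hz
    have h1 := DFunLike.congr_fun hcommSq z
    simp only [RingHom.coe_comp, Function.comp_apply] at h1
    have h2 : MonoidAlgebra.mapDomainRingHom (IsLocalRing.ResidueField S)
        (QuotientGroup.mk' C) (resHom S G z) = 0 := by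
      rw [h1, hz, map_zero]
    exact h2
  -- the two kernel elements
  have hunit_aux : ∀ z1 z2 : MonoidAlgebra S G, f z1 * f z2 = 1 →
      IsUnit (z1 * z2) := by
    intro z1 z2 h12
    set k1 : MonoidAlgebra S G := z1 * z2 - 1 with hk1def
    have hk1 : f k1 = 0 := by
      rw [hk1def, map_sub, map_mul, h12, map_one, sub_self]
    have hknil : (resHom S G k1) ^ (p ^ n) = 0 :=
      aux_nil p (IsLocalRing.ResidueField S) C σ hσC n hord hgen s hs _ (hker_res _ hk1)
    have := aux_isUnit S G k1 (p ^ n) hknil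
    have heq : 1 + k1 = z1 * z2 := by rw [hk1def]; abel
    rwa [heq] at this
  have hux : IsUnit (x * y) := hunit_aux x y (by rw [hx, hy]; exact u'.mul_inv)
  have huy : IsUnit (y * x) := hunit_aux y x (by rw [hx, hy]; exact u'.inv_mul)
  obtain ⟨v, hv⟩ := hux
  obtain ⟨w, hw⟩ := huy
  have hxb : x * (y * ↑v⁻¹) = 1 := by rw [← mul_assoc, ← hv, Units.mul_inv]
  have hbx : (y * ↑v⁻¹) * x = 1 := by
    have hcx : (↑w⁻¹ * y) * x = 1 := by rw [mul_assoc, ← hw, Units.inv_mul]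
    have hbc : (↑w⁻¹ * y : MonoidAlgebra S G) = y * ↑v⁻¹ := by
      calc (↑w⁻¹ * y : MonoidAlgebra S G)
          = (↑w⁻¹ * y) * (x * (y * ↑v⁻¹)) := by rw [hxb, mul_one]
        _ = ((↑w⁻¹ * y) * x) * (y * ↑v⁻¹) := (mul_assoc _ _ _).symm
        _ = y * ↑v⁻¹ := by rw [hcx, one_mul]
    rw [← hbc, hcx]
  refine ⟨⟨x, y * ↑v⁻¹, by rw [hxb], by rw [hbx]⟩, ?_⟩
  apply Units.ext
  rw [Units.coe_map]
  exact hx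
end

section
/- Let κ be a p-closed algebraic extension of 𝔽_p, i.e. κ admits no field extension of degree p, and let R = W(κ) be its ring of Witt vectors, with φ the Frobenius endomorphism of R (the Witt vector functorial lift of x ↦ x^p). Then the sequence 0 → ℤ_p → R → R → 0 is exact, where the first map is the natural inclusion and the second map is 1 − φ; that is, 1 − φ : R → R is surjective with kernel exactly ℤ_p. -/
/-! STATEMENT 14 preamble: auxiliary development. -/

set_option linter.unusedSectionVars false

open WittVector Function Polynomial

namespace AS14


variable {p : ℕ} [hp : Fact p.Prime]

section Witt
variable {κ : Type} [CommRing κ] [CharP κ p]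

local notation "𝕎" => WittVector p

lemma itV_coeff_lt (z : 𝕎 κ) : ∀ (k i : ℕ), i < k → (verschiebung^[k] z).coeff i = 0 := by
  intro k
  induction k with
  | zero => intro i hi; omega
  | succ k ih =>
    intro i hi
    rw [Function.iterate_succ_apply']
    cases i with
    | zero => exact verschiebung_coeff_zero _
    | succ i => rw [verschiebung_coeff_succ]; exact ih i (by omega)

lemma exists_itV (y : 𝕎 κ) (k : ℕ) (h : ∀ i < k, y.coeff i = 0) :
    ∃ z : 𝕎 κ, verschiebung^[k] z = y := by
  refine ⟨WittVector.mk p (fun i => y.coeff (i + k)), ?_⟩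
  ext i
  rcases lt_or_ge i k with hik | hik
  · rw [itV_coeff_lt _ k i hik, h i hik]
  · obtain ⟨j, rfl⟩ : ∃ j, i = j + k := ⟨i - k, by omega⟩
    rw [iterate_verschiebung_coeff]
    rfl

lemma itV_sub (k : ℕ) (a b : 𝕎 κ) :
    verschiebung^[k] (a - b) = verschiebung^[k] a - verschiebung^[k] b := by
  induction k with
  | zero => rfl
  | succ k ih => rw [Function.iterate_succ_apply', Function.iterate_succ_apply',
      Function.iterate_succ_apply', ih, map_sub]

lemma key_sub (k : ℕ) (a b : 𝕎 κ) (ha : ∀ i < k, a.coeff i = 0) (hb : ∀ i < k, b.coeff i = 0) :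
    (∀ i < k, (a - b).coeff i = 0) ∧ (a - b).coeff k = a.coeff k - b.coeff k := by
  obtain ⟨a', rfl⟩ := exists_itV a k ha
  obtain ⟨b', rfl⟩ := exists_itV b k hb
  rw [← itV_sub]
  refine ⟨fun i hi => itV_coeff_lt _ k i hi, ?_⟩
  have h0 : ∀ c : 𝕎 κ, (verschiebung^[k] c).coeff k = c.coeff 0 := by
    intro c
    have := iterate_verschiebung_coeff (p := p) c k 0
    rwa [zero_add] at this
  rw [h0, h0, h0]
  have := map_sub (WittVector.constantCoeff (p := p) (R := κ)) a' b'
  simpa using this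

lemma itV_map {κ' : Type} [CommRing κ'] [CharP κ' p] (f : κ →+* κ') (k : ℕ) (z : 𝕎 κ) :
    WittVector.map f (verschiebung^[k] z) = verschiebung^[k] (WittVector.map f z) := by
  induction k with
  | zero => rfl
  | succ k ih => rw [Function.iterate_succ_apply', Function.iterate_succ_apply',
      map_verschiebung, ih]

lemma init_map (f : κ →+* κ) (N : ℕ) (x : 𝕎 κ) :
    init N (WittVector.map f x) = WittVector.map f (init N x) := by
  ext i
  simp only [init, select, coeff_mk, map_coeff]
  split_ifs
  · rfl
  · exact (map_zero f).symm

lemma coeff_init (N i : ℕ) (h : i < N) (x : 𝕎 κ) : (init N x).coeff i = x.coeff i := by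
  simp only [init, select, coeff_mk, if_pos h]

lemma init_congr (y : 𝕎 κ) (N : ℕ) (u u' : 𝕎 κ) (h : init N u = init N u') :
    init N (y - (u - WittVector.map (_root_.frobenius κ p) u)) =
    init N (y - (u' - WittVector.map (_root_.frobenius κ p) u')) := by
  set f := _root_.frobenius κ p
  have h2 : init N (u - WittVector.map f u) = init N (u' - WittVector.map f u') := by
    rw [init_sub u, init_sub u', init_map, init_map, h]
  rw [init_sub y, init_sub y (u' - _), h2]

end Witt

section Surj

variable {κ : Type} [Field κ] [CharP κ p]

local notation "𝕎" => WittVector p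

/-- One step of the approximation sequence. -/
noncomputable def seq (hAS : ∀ c : κ, ∃ t : κ, t - t ^ p = c) (y : 𝕎 κ) : ℕ → 𝕎 κ
  | 0 => 0
  | k + 1 =>
    let x := seq hAS y k
    x + verschiebung^[k] (teichmuller p (Classical.choose
      (hAS ((y - (x - WittVector.map (_root_.frobenius κ p) x)).coeff k))))

lemma seq_invariant (hAS : ∀ c : κ, ∃ t : κ, t - t ^ p = c) (y : 𝕎 κ) :
    ∀ k, ∀ i < k,
      (y - (seq hAS y k - WittVector.map (_root_.frobenius κ p) (seq hAS y k))).coeff i = 0 := by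
  set f := _root_.frobenius κ p
  intro k
  induction k with
  | zero => intro i hi; omega
  | succ k ih =>
    set x := seq hAS y k with hx
    set c := (y - (x - WittVector.map f x)).coeff k with hc
    set t := Classical.choose (hAS c) with htdef
    have ht : t - t ^ p = c := Classical.choose_spec (hAS c)
    set w : 𝕎 κ := verschiebung^[k] (teichmuller p t) with hw
    have hseq : seq hAS y (k + 1) = x + w := rfl
    have hfw : WittVector.map f w = verschiebung^[k] (teichmuller p (t ^ p)) := by
      rw [hw, itV_map, map_teichmuller]
      rfl
    have hdiff : w - WittVector.map f w = verschiebung^[k] (teichmuller p t - teichmuller p (t ^ p)) := by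
      rw [itV_sub, hfw]
    have halg : y - (seq hAS y (k+1) - WittVector.map f (seq hAS y (k+1)))
        = (y - (x - WittVector.map f x)) - (w - WittVector.map f w) := by
      rw [hseq, map_add]; ring
    have hwlow : ∀ i < k, (w - WittVector.map f w).coeff i = 0 := by
      intro i hi; rw [hdiff]; exact itV_coeff_lt _ k i hi
    have hwk : (w - WittVector.map f w).coeff k = c := by
      rw [hdiff]
      have := iterate_verschiebung_coeff (p := p) (teichmuller p t - teichmuller p (t ^ p)) k 0
      rw [zero_add] at this
      rw [this]
      have hsub := map_sub (WittVector.constantCoeff (p := p) (R := κ)) (teichmuller p t)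
        (teichmuller p (t ^ p))
      simp only [WittVector.constantCoeff_apply, teichmuller_coeff_zero] at hsub
      rw [hsub, ht]
    obtain ⟨hlow, hk⟩ := key_sub k (y - (x - WittVector.map f x)) (w - WittVector.map f w)
      (ih) (hwlow)
    intro i hi
    rw [halg]
    rcases Nat.lt_succ_iff_lt_or_eq.mp hi with hik | rfl
    · exact hlow i hik
    · rw [hk, hwk, sub_self]

lemma seq_stab (hAS : ∀ c : κ, ∃ t : κ, t - t ^ p = c) (y : 𝕎 κ) (k : ℕ) :
    init k (seq hAS y (k + 1)) = init k (seq hAS y k) := by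
  set x := seq hAS y k
  have hseq : seq hAS y (k + 1) = x + verschiebung^[k] (teichmuller p _) := rfl
  rw [hseq, init_add]
  have h0 : init k (verschiebung^[k] (teichmuller p (Classical.choose
      (hAS ((y - (x - WittVector.map (_root_.frobenius κ p) x)).coeff k))))) = 0 := by
    ext i
    simp only [init, select, coeff_mk, zero_coeff]
    split_ifs with hi
    · exact itV_coeff_lt _ k i hi
    · rfl
  rw [h0, add_zero, init_init]

lemma seq_coeff_stab (hAS : ∀ c : κ, ∃ t : κ, t - t ^ p = c) (y : 𝕎 κ)
    (i k k' : ℕ) (h1 : i < k) (h2 : k ≤ k') :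
    (seq hAS y k').coeff i = (seq hAS y k).coeff i := by
  induction k' , h2 using Nat.le_induction with
  | base => rfl
  | succ k' hk ih =>
    have := seq_stab hAS y k'
    have hco : (init k' (seq hAS y (k' + 1))).coeff i = (init k' (seq hAS y k')).coeff i := by
      rw [this]
    rw [coeff_init _ _ (by omega), coeff_init _ _ (by omega)] at hco
    rw [hco, ih]

lemma one_sub_frob_surj (hAS : ∀ c : κ, ∃ t : κ, t - t ^ p = c) (y : 𝕎 κ) :
    ∃ x : 𝕎 κ, x - WittVector.map (_root_.frobenius κ p) x = y := by
  set f := _root_.frobenius κ p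
  set x := WittVector.mk p (fun n => (seq hAS y (n + 1)).coeff n) with hxdef
  have hinit : ∀ N, init N x = init N (seq hAS y N) := by
    intro N
    ext i
    simp only [init, select, coeff_mk]
    split_ifs with hi
    · rw [hxdef, coeff_mk]
      exact (seq_coeff_stab hAS y i (i + 1) N (by omega) (by omega)).symm
    · rfl
  refine ⟨x, ?_⟩
  have hz : y - (x - WittVector.map f x) = 0 := by
    ext n
    rw [zero_coeff]
    have hc := init_congr y (n + 1) x (seq hAS y (n + 1)) (hinit (n + 1))
    have := congrArg (fun v => coeff v n) hc
    rw [coeff_init _ _ (by omega), coeff_init _ _ (by omega)] at this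
    rw [this]
    exact seq_invariant hAS y (n + 1) n (by omega)
  have := sub_eq_zero.mp hz
  exact this.symm

end Surj


/-- In a field of characteristic `p`, any solution of `u ^ p = u` lies in the prime field. -/
lemma pth_fixed {K : Type*} [Field K] [CharP K p] (u : K) (hu : u ^ p = u) :
    ∃ a : ZMod p, ZMod.castHom dvd_rfl K a = u := by
  have hlt : 1 < p := hp.out.one_lt
  set q : (ZMod p)[X] := X ^ p - X with hq
  have hq0 : q ≠ 0 := by
    have := FiniteField.X_pow_card_sub_X_ne_zero (ZMod p) hlt
    simpa [hq] using this
  have hsplit : Splits q := by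
    rw [splits_iff_card_roots]
    have hroots : q.roots = Finset.univ.val := by
      have := FiniteField.roots_X_pow_card_sub_X (ZMod p)
      rwa [ZMod.card p] at this
    rw [hroots]
    have hdeg : q.natDegree = p := by
      have := FiniteField.X_pow_card_sub_X_natDegree_eq (ZMod p) hlt
      simpa [hq] using this
    simp [hdeg, ZMod.card p, Finset.card_univ]
  set ψ := ZMod.castHom (dvd_rfl : p ∣ p) K with hψ
  have hmem : u ∈ (q.map ψ).roots := by
    refine mem_roots'.mpr ⟨(Polynomial.map_ne_zero_iff ψ.injective).mpr hq0, ?_⟩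
    simp [hq, IsRoot, hu]
  rw [hsplit.roots_map ψ] at hmem
  obtain ⟨a, _, ha⟩ := Multiset.mem_map.mp hmem
  exact ⟨a, ha⟩

lemma artin_schreier_surj {κ : Type} [Field κ] [CharP κ p]
    (hpclosed : ∀ (κ' : Type) [Field κ'] [Algebra κ κ'], Module.finrank κ κ' ≠ p)
    (c : κ) : ∃ s : κ, s ^ p - s = c := by
  by_contra hcon
  push_neg at hcon
  set K := AlgebraicClosure κ with hK
  haveI hKchar : CharP K p := charP_of_injective_algebraMap (algebraMap κ K).injective p
  set f : κ[X] := X ^ p - X - C c with hf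
  have h2p : 2 ≤ p := hp.out.two_le
  have hdXC : (X + C c : κ[X]).degree = 1 := by
    simpa using Polynomial.degree_X_add_C c
  have hmo : f.Monic := by
    have hf2 : f = X ^ (p - 1 + 1) - (X + C c) := by
      rw [hf, Nat.sub_add_cancel hp.out.one_le]; ring
    rw [hf2]
    apply Polynomial.monic_X_pow_sub
    rw [hdXC]
    exact_mod_cast (by omega : 1 < p - 1 + 1)
  have hfdeg : f.degree = (p : WithBot ℕ) := by
    rw [hf, sub_sub]
    rw [Polynomial.degree_sub_eq_left_of_degree_lt]
    · exact Polynomial.degree_X_pow p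
    · rw [hdXC, Polynomial.degree_X_pow]
      exact_mod_cast (by omega : 1 < p)
  have hfnat : f.natDegree = p := Polynomial.natDegree_eq_of_degree_eq_some hfdeg
  obtain ⟨t, htroot⟩ : ∃ t : K, aeval t f = 0 :=
    IsAlgClosed.exists_aeval_eq_zero K f (by rw [hfdeg]; exact_mod_cast (by omega : p ≠ 0))
  have ht' : t ^ p - t = algebraMap κ K c := by
    have : aeval t f = t ^ p - t - algebraMap κ K c := by simp [hf]
    rw [this] at htroot
    linear_combination htroot
  have htint : IsIntegral κ t := ⟨f, hmo, htroot⟩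
  set g := minpoly κ t with hg
  have hgmo : g.Monic := minpoly.monic htint
  have hgdvd : g ∣ f := minpoly.dvd κ t htroot
  have hd0 : 0 < g.natDegree := minpoly.natDegree_pos htint
  have hdle : g.natDegree ≤ p := by
    have := Polynomial.natDegree_le_of_dvd hgdvd hmo.ne_zero
    omega
  have hsplits : Splits (g.map (algebraMap κ K)) := IsAlgClosed.splits _
  set M := (g.map (algebraMap κ K)).roots with hM
  have hcard : Multiset.card M = g.natDegree := by
    rw [hM, ← hsplits.natDegree_eq_card_roots, Polynomial.natDegree_map]
  have hrange : ∀ r ∈ M, r - t ∈ (algebraMap κ K).range := by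
    intro r hr
    have hroot : aeval r g = 0 := by
      have := isRoot_of_mem_roots hr
      rwa [Polynomial.IsRoot, Polynomial.eval_map, ← Polynomial.aeval_def] at this
    have hfr : aeval r f = 0 := by
      obtain ⟨q, hq'⟩ := hgdvd
      rw [hq', map_mul, hroot, zero_mul]
    have hr' : r ^ p - r = algebraMap κ K c := by
      have : aeval r f = r ^ p - r - algebraMap κ K c := by simp [hf]
      rw [this] at hfr
      linear_combination hfr
    have hfix : (r - t) ^ p = r - t := by
      rw [sub_pow_char]
      linear_combination hr' - ht'
    obtain ⟨a, ha⟩ := pth_fixed (p := p) (r - t) hfix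
    refine ⟨ZMod.castHom (dvd_rfl : p ∣ p) κ a, ?_⟩
    have huniq : (algebraMap κ K).comp (ZMod.castHom (dvd_rfl : p ∣ p) κ) =
        ZMod.castHom (dvd_rfl : p ∣ p) K := Subsingleton.elim _ _
    calc algebraMap κ K (ZMod.castHom (dvd_rfl : p ∣ p) κ a)
        = ((algebraMap κ K).comp (ZMod.castHom (dvd_rfl : p ∣ p) κ)) a := rfl
      _ = ZMod.castHom (dvd_rfl : p ∣ p) K a := by rw [huniq]
      _ = r - t := ha
  have hsum : M.sum = -(g.map (algebraMap κ K)).nextCoeff := by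
    have := hsplits.nextCoeff_eq_neg_sum_roots_of_monic (hgmo.map (algebraMap κ K))
    rw [this, neg_neg]
  have hsum_mem : M.sum ∈ (algebraMap κ K).range := by
    refine ⟨-g.nextCoeff, ?_⟩
    rw [map_neg, ← Polynomial.nextCoeff_map (algebraMap κ K).injective, hsum]
  have hdiff_mem : M.sum - (Multiset.card M) • t ∈ (algebraMap κ K).range := by
    have heq : ∀ (s : Multiset K), (s.map (fun r => r - t)).sum = s.sum - (Multiset.card s) • t := by
      intro s
      induction s using Multiset.induction_on with
      | empty => simp
      | cons ih =>
        rename_i a s ih2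
        simp only [Multiset.map_cons, Multiset.sum_cons, Multiset.card_cons, ih2, succ_nsmul]
        ring
    rw [← heq M]
    refine multiset_sum_mem _ ?_
    intro x hx
    obtain ⟨r, hr, rfl⟩ := Multiset.mem_map.mp hx
    exact hrange r hr
  have hdt_mem : (g.natDegree : K) * t ∈ (algebraMap κ K).range := by
    have h1 : (Multiset.card M : K) * t = M.sum - (M.sum - (Multiset.card M) • t) := by
      rw [nsmul_eq_mul]; ring
    rw [← hcard, h1]
    exact sub_mem hsum_mem hdiff_mem
  by_cases hpd : p ∣ g.natDegree
  · have hdp : g.natDegree = p := Nat.le_antisymm hdle (Nat.le_of_dvd hd0 hpd)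
    exact hpclosed (IntermediateField.adjoin κ {t} : IntermediateField κ K)
      (by rw [IntermediateField.adjoin.finrank htint]; exact hdp)
  · have hdκ : (g.natDegree : κ) ≠ 0 := by
      rwa [Ne, CharP.cast_eq_zero_iff κ p _]
    have hdK : (g.natDegree : K) ≠ 0 := by
      rwa [Ne, CharP.cast_eq_zero_iff K p _]
    obtain ⟨s, hs⟩ := hdt_mem
    have htmem : t = algebraMap κ K ((g.natDegree : κ)⁻¹ * s) := by
      rw [map_mul, hs, map_inv₀, map_natCast, inv_mul_cancel_left₀ hdK]
    apply hcon ((g.natDegree : κ)⁻¹ * s)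
    apply (algebraMap κ K).injective
    rw [map_sub, map_pow, ← htmem, ht']

section Main

variable {κ : Type} [Field κ] [CharP κ p]

lemma hAS_of_pclosed
    (hpclosed : ∀ (κ' : Type) [Field κ'] [Algebra κ κ'], Module.finrank κ κ' ≠ p) :
    ∀ c : κ, ∃ t : κ, t - t ^ p = c := by
  intro c
  obtain ⟨s, hs⟩ := artin_schreier_surj (p := p) hpclosed c
  refine ⟨-s, ?_⟩
  have hneg : (-s) ^ p = -(s ^ p) := by
    rw [neg_pow, neg_one_pow_char κ p, neg_one_mul]
  rw [hneg]
  linear_combination hs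

end Main

end AS14

theorem wittVector_one_sub_frobenius_exact
    (p : ℕ) [Fact p.Prime]
    (κ : Type) [Field κ] [CharP κ p] [Algebra (ZMod p) κ] [Algebra.IsAlgebraic (ZMod p) κ]
    (hpclosed : ∀ (κ' : Type) [Field κ'] [Algebra κ κ'], Module.finrank κ κ' ≠ p) :
    Function.Injective
        ((WittVector.map (ZMod.castHom dvd_rfl κ)).comp
          ((WittVector.equiv p).symm : ℤ_[p] →+* WittVector p (ZMod p))) ∧
      Function.Surjective
        (fun x : WittVector p κ => x - WittVector.map (frobenius κ p) x) ∧
      ∀ x : WittVector p κ,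
        x - WittVector.map (frobenius κ p) x = 0 ↔
          x ∈ Set.range ((WittVector.map (ZMod.castHom dvd_rfl κ)).comp
            ((WittVector.equiv p).symm : ℤ_[p] →+* WittVector p (ZMod p))) := by
  have hAS := AS14.hAS_of_pclosed (p := p) (κ := κ) hpclosed
  have hcastinj : Function.Injective (ZMod.castHom (dvd_rfl : p ∣ p) κ) :=
    (ZMod.castHom (dvd_rfl : p ∣ p) κ).injective
  have hmapinj : Function.Injective
      (WittVector.map (p := p) (ZMod.castHom (dvd_rfl : p ∣ p) κ)) :=
    WittVector.map_injective _ hcastinj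
  refine ⟨?_, ?_, ?_⟩
  · rw [RingHom.coe_comp]
    exact hmapinj.comp (RingEquiv.injective _)
  · intro y
    obtain ⟨x, hx⟩ := AS14.one_sub_frob_surj hAS y
    exact ⟨x, hx⟩
  · intro x
    have hrangeeq : Set.range ⇑((WittVector.map (ZMod.castHom dvd_rfl κ)).comp
          ((WittVector.equiv p).symm : ℤ_[p] →+* WittVector p (ZMod p)))
        = Set.range ⇑(WittVector.map (ZMod.castHom (dvd_rfl : p ∣ p) κ)) := by
      rw [RingHom.coe_comp]
      exact Function.Surjective.range_comp (RingEquiv.surjective _) _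
    rw [hrangeeq]
    constructor
    · intro h
      have hx : x = WittVector.map (frobenius κ p) x := sub_eq_zero.mp h
      have hcoeff : ∀ n, (x.coeff n) ^ p = x.coeff n := by
        intro n
        conv_rhs => rw [hx]
        rw [WittVector.map_coeff]
        rfl
      refine ⟨WittVector.mk p (fun n => Classical.choose (AS14.pth_fixed (p := p)
        (x.coeff n) (hcoeff n))), ?_⟩
      ext n
      rw [WittVector.map_coeff, WittVector.coeff_mk]
      exact Classical.choose_spec (AS14.pth_fixed (p := p) (x.coeff n) (hcoeff n))
    · rintro ⟨z, rfl⟩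
      have hfz : WittVector.map (frobenius κ p)
            (WittVector.map (ZMod.castHom (dvd_rfl : p ∣ p) κ) z)
          = WittVector.map (ZMod.castHom (dvd_rfl : p ∣ p) κ) z := by
        ext n
        rw [WittVector.map_coeff, WittVector.map_coeff]
        rw [frobenius_def, ← map_pow, ZMod.pow_card]
      rw [hfz, sub_self]
end
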